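/- Let f be a homeomorphism of an annular continuum K in an annulus such that the rotation set σ(f,K) is a single number {α}. Then the sequence of functions x ↦ (p₁(f̃ⁿ(x̃)) − p₁(x̃))/n converges uniformly on π⁻¹(K) to the constant α; in particular, every point of K has rotation number α under f. -/

import Mathlib

/- Model of the open annulus A = S¹ × (0,1), with universal cover ℝ × (0,1). -/

noncomputable section
open Set Filter Topology MeasureTheory

/-- The open interval (0,1) as a type. -/
abbrev IooT : Type := ↥(Set.Ioo (0:ℝ) 1)

/-- The open annulus `A = S¹ × (0,1)`. -/
abbrev Ann : Type := AddCircle (1:ℝ) × IooT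

/-- The universal cover `Ã = ℝ × (0,1)` of the open annulus. -/
abbrev Cov : Type := ℝ × IooT

/-- The covering projection `Ã → A`. -/
def proj : Cov → Ann := fun z => ((z.1 : AddCircle (1:ℝ)), z.2)

/-- An arc (curve) in `A` connecting the left end (y → 0) to the right end (y → 1). -/
def ConnectsEnds (γ : ℝ → Ann) : Prop :=
  Continuous γ ∧ Filter.Tendsto (fun t => ((γ t).2 : ℝ)) Filter.atBot (nhds 0) ∧
    Filter.Tendsto (fun t => ((γ t).2 : ℝ)) Filter.atTop (nhds 1)

/-- A subset of the annulus is separating (essential) if every arc connecting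
the two ends of `A` meets it. -/
def Separating (M : Set Ann) : Prop := ∀ γ : ℝ → Ann, ConnectsEnds γ → ∃ t, γ t ∈ M

/-- A separator: a compact, connected, separating subset of the annulus. -/
def IsSeparator (M : Set Ann) : Prop := IsCompact M ∧ IsConnected M ∧ Separating M

/-- A set contains the left end of the annulus. -/
def ContainsLeftEnd (U : Set Ann) : Prop := ∃ ε > (0:ℝ), ∀ p : Ann, ((p.2 : ℝ) < ε) → p ∈ U

/-- A set contains the right end of the annulus. -/
def ContainsRightEnd (U : Set Ann) : Prop := ∃ ε > (0:ℝ), ∀ p : Ann, (1 - ε < (p.2 : ℝ)) → p ∈ U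

/-- `U` is a connected component of the complement of `M`. -/
def IsComponentOfCompl (M U : Set Ann) : Prop := ∃ p, p ∉ M ∧ U = connectedComponentIn Mᶜ p

/-- `U` is the component of `A − M` containing the left end (`A_L(M)`). -/
def IsLeftComponent (M U : Set Ann) : Prop := IsComponentOfCompl M U ∧ ContainsLeftEnd U

/-- `U` is the component of `A − M` containing the right end (`A_R(M)`). -/
def IsRightComponent (M U : Set Ann) : Prop := IsComponentOfCompl M U ∧ ContainsRightEnd U

instance : Fact ((0:ℝ) < 1) := ⟨one_pos⟩

/-- `K ⊆ A` has exactly two complementary connected components. -/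
def HasTwoComplComponents (K : Set Ann) : Prop :=
  ∃ L R : Set Ann, IsConnected L ∧ IsConnected R ∧ Disjoint L R ∧ Kᶜ = L ∪ R

/-- An essential annular continuum: a compact connected separating set whose
complement in `A` has exactly two components. -/
def IsAnnularContinuum (K : Set Ann) : Prop :=
  IsCompact K ∧ IsConnected K ∧ Separating K ∧ HasTwoComplComponents K

/-- The rotation set `σ(f,K)`: the set of integrals `∫ φ dμ` over all `f`-invariant
Borel probability measures `μ` supported on `K`, where `φ` lifts to the displacement
`p₁ ∘ f̃ − p₁`. -/
def rotSet (f : Ann → Ann) (φ : Ann → ℝ) (K : Set Ann) : Set ℝ :=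
  {r | ∃ μ : Measure Ann, IsProbabilityMeasure μ ∧ μ.map f = μ ∧ μ Kᶜ = 0 ∧
    r = ∫ x, φ x ∂μ}

namespace FLC
open BoundedContinuousFunction TopologicalSpace
open scoped NNReal ENNReal

abbrev BCF := BoundedContinuousFunction Ann ℝ

/-- Interface for a positive normalized `f`-invariant linear functional that
only sees the compact set `K`. -/
structure InvFunctional (f : Ann → Ann) (K : Set Ann) (L : BCF → ℝ) : Prop where
  map_add : ∀ g h : BCF, L (g + h) = L g + L h
  map_smul : ∀ (c : ℝ) (g : BCF), L (c • g) = c * L g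
  map_one : L 1 = 1
  posK : ∀ g : BCF, (∀ x ∈ K, 0 ≤ g x) → 0 ≤ L g
  inv : ∀ g h : BCF, (∀ x, h x = g (f x)) → L h = L g

namespace InvFunctional

variable {f : Ann → Ann} {K : Set Ann} {L : BCF → ℝ} (hL : InvFunctional f K L)
include hL

theorem map_zero : L 0 = 0 := by
  have := hL.map_smul 0 0
  simpa using this

theorem map_neg (g : BCF) : L (-g) = - L g := by
  have := hL.map_smul (-1) g
  rw [show (-1 : ℝ) • g = -g from neg_one_smul ℝ g] at this
  simpa using this

theorem map_sub (g h : BCF) : L (g - h) = L g - L h := by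
  have := hL.map_add g (-h)
  rw [hL.map_neg] at this
  simpa [sub_eq_add_neg] using this

theorem monoK (g h : BCF) (hgh : ∀ x ∈ K, g x ≤ h x) : L g ≤ L h := by
  have h0 : 0 ≤ L (h - g) := hL.posK _ (by
    intro x hx
    simp only [coe_sub, Pi.sub_apply, sub_nonneg]
    exact hgh x hx)
  rw [hL.map_sub] at h0
  linarith

theorem map_const (c : ℝ) : L (c • (1 : BCF)) = c := by
  rw [hL.map_smul, hL.map_one, mul_one]

theorem eqK_zero (g : BCF) (hg : ∀ x ∈ K, g x = 0) : L g = 0 := by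
  have h1 : 0 ≤ L g := hL.posK g (fun x hx => (hg x hx).ge)
  have h2 : 0 ≤ L (-g) := hL.posK (-g) (fun x hx => by simp [hg x hx])
  rw [hL.map_neg] at h2
  linarith

theorem map_finset_sum {ι : Type*} (s : Finset ι) (g : ι → BCF) :
    L (∑ i ∈ s, g i) = ∑ i ∈ s, L (g i) := by
  classical
  induction s using Finset.induction_on with
  | empty => simpa using hL.map_zero
  | insert _ _ h ih => rw [Finset.sum_insert h, hL.map_add, ih, Finset.sum_insert h]

end InvFunctional

/-- The set of test functions for a set `M`: nonnegative bounded continuous functions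
that are at least `1` on `M`. -/
def testS (M : Set Ann) : Set BCF := {g : BCF | (∀ x, 0 ≤ g x) ∧ ∀ x ∈ M, 1 ≤ g x}

theorem one_mem_testS (M : Set Ann) : (1 : BCF) ∈ testS M :=
  ⟨fun x => by simp, fun x _ => by simp⟩

/-- The Riesz content associated to the functional `L`. -/
def lam (L : BCF → ℝ) (M : Set Ann) : ℝ := sInf (L '' testS M)

section lamLemmas

variable {f : Ann → Ann} {K : Set Ann} {L : BCF → ℝ} (hL : InvFunctional f K L)
include hL

omit hL in theorem nonempty_image (M : Set Ann) : (L '' testS M).Nonempty :=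
  ⟨L 1, 1, one_mem_testS M, rfl⟩

theorem bddBelow_image (M : Set Ann) : BddBelow (L '' testS M) := by
  refine ⟨0, ?_⟩
  rintro r ⟨g, hg, rfl⟩
  exact hL.posK g (fun x _ => hg.1 x)

theorem lam_nonneg (M : Set Ann) : 0 ≤ lam L M :=
  le_csInf (nonempty_image M) (by rintro r ⟨g, hg, rfl⟩; exact hL.posK g (fun x _ => hg.1 x))

theorem lam_le {M : Set Ann} {g : BCF} (hg : g ∈ testS M) : lam L M ≤ L g :=
  csInf_le (bddBelow_image hL M) ⟨g, hg, rfl⟩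

theorem lam_le_one (M : Set Ann) : lam L M ≤ 1 := by
  simpa [hL.map_one] using lam_le hL (one_mem_testS M)

theorem lam_mono {M₁ M₂ : Set Ann} (h : M₁ ⊆ M₂) : lam L M₁ ≤ lam L M₂ := by
  refine csInf_le_csInf (bddBelow_image hL M₁) (nonempty_image M₂) ?_
  rintro r ⟨g, hg, rfl⟩
  exact ⟨g, ⟨hg.1, fun x hx => hg.2 x (h hx)⟩, rfl⟩

theorem one_le_lam_K : 1 ≤ lam L K := by
  refine le_csInf (nonempty_image K) ?_
  rintro r ⟨g, hg, rfl⟩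
  have : L (1 : BCF) ≤ L g := hL.monoK _ _ (fun x hx => by simpa using hg.2 x hx)
  rwa [hL.map_one] at this

omit hL in theorem exists_test (M : Set Ann) {ε : ℝ} (hε : 0 < ε) :
    ∃ g ∈ testS M, L g < lam L M + ε := by
  obtain ⟨r, ⟨g, hg, rfl⟩, hr⟩ :=
    exists_lt_of_csInf_lt (nonempty_image M) (lt_add_of_pos_right (lam L M) hε)
  exact ⟨g, hg, hr⟩

theorem lam_union_le (M₁ M₂ : Set Ann) :
    lam L (M₁ ∪ M₂) ≤ lam L M₁ + lam L M₂ := by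
  refine le_of_forall_pos_le_add ?_
  intro ε hε
  obtain ⟨g₁, hg₁, hLg₁⟩ := exists_test (L := L) M₁ (half_pos hε)
  obtain ⟨g₂, hg₂, hLg₂⟩ := exists_test (L := L) M₂ (half_pos hε)
  have hmem : g₁ + g₂ ∈ testS (M₁ ∪ M₂) := by
    constructor
    · intro x; simpa using add_nonneg (hg₁.1 x) (hg₂.1 x)
    · rintro x (hx | hx)
      · simpa using le_add_of_le_of_nonneg (hg₁.2 x hx) (hg₂.1 x)
      · simpa using le_add_of_nonneg_of_le (hg₁.1 x) (hg₂.2 x hx)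
  calc lam L (M₁ ∪ M₂) ≤ L (g₁ + g₂) := lam_le hL hmem
    _ = L g₁ + L g₂ := hL.map_add _ _
    _ ≤ lam L M₁ + ε / 2 + (lam L M₂ + ε / 2) := by linarith
    _ = lam L M₁ + lam L M₂ + ε := by ring

end lamLemmas

end FLC
namespace FLC
open BoundedContinuousFunction TopologicalSpace
open scoped NNReal ENNReal

section lamLemmas2

variable {f : Ann → Ann} {K : Set Ann} {L : BCF → ℝ} (hL : InvFunctional f K L)
include hL

/-- Multiply a test function by a `[0,1]`-valued continuous function. -/
def mulCut (g : BCF) (w : C(Ann, ℝ)) (hw : ∀ x, w x ∈ Icc (0:ℝ) 1) : BCF :=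
  BoundedContinuousFunction.ofNormedAddCommGroup (fun x => g x * w x)
    (g.continuous.mul w.continuous) ‖g‖ (by
      intro x
      have h1 : |g x| ≤ ‖g‖ := by
        simpa [Real.norm_eq_abs] using g.norm_coe_le_norm x
      have h2 : |w x| ≤ 1 := by
        rw [abs_le]; exact ⟨le_trans (by norm_num) (hw x).1, (hw x).2⟩
      calc ‖g x * w x‖ = |g x| * |w x| := by simp [Real.norm_eq_abs, abs_mul]
        _ ≤ ‖g‖ * 1 := by
            apply mul_le_mul h1 h2 (abs_nonneg _) (le_trans (abs_nonneg _) h1)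
        _ = ‖g‖ := mul_one _)

omit hL in
theorem mulCut_apply (g : BCF) (w : C(Ann, ℝ)) (hw : ∀ x, w x ∈ Icc (0:ℝ) 1) (x : Ann) :
    mulCut g w hw x = g x * w x := rfl

/-- Additivity of the content on disjoint compacta. -/
theorem add_le_lam_union {M₁ M₂ : Set Ann} (h₁ : IsClosed M₁) (h₂ : IsClosed M₂)
    (hd : Disjoint M₁ M₂) :
    lam L M₁ + lam L M₂ ≤ lam L (M₁ ∪ M₂) := by
  obtain ⟨w, hw0, hw1, hw01⟩ := exists_continuous_zero_one_of_isClosed h₁ h₂ hd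
  refine le_of_forall_pos_le_add ?_
  intro ε hε
  obtain ⟨g, hg, hLg⟩ := exists_test (L := L) (M₁ ∪ M₂) hε
  have hw01' : ∀ x, (1 - w x) ∈ Icc (0:ℝ) 1 := by
    intro x
    have := hw01 x
    constructor <;> [linarith [this.2]; linarith [this.1]]
  set g₂ : BCF := mulCut g w hw01 with hg₂
  set g₁ : BCF := mulCut g (ContinuousMap.const Ann 1 - w) (by
      intro x
      have h := hw01 x
      constructor
      · simp only [ContinuousMap.sub_apply, ContinuousMap.const_apply]
        linarith [h.2]
      · simp only [ContinuousMap.sub_apply, ContinuousMap.const_apply]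
        linarith [h.1]) with hg₁
  have hg₁x : ∀ x, g₁ x = g x * (1 - w x) := fun x => rfl
  have hg₂x : ∀ x, g₂ x = g x * w x := fun x => rfl
  have hsum : g₁ + g₂ = g := by
    ext x
    simp only [coe_add, Pi.add_apply, hg₁x, hg₂x]
    ring
  have hmem₁ : g₁ ∈ testS M₁ := by
    constructor
    · intro x
      rw [hg₁x x]
      exact mul_nonneg (hg.1 x) (by linarith [(hw01 x).2])
    · intro x hx
      have : w x = 0 := hw0 hx
      rw [hg₁x, this]
      simpa using hg.2 x (Or.inl hx)
  have hmem₂ : g₂ ∈ testS M₂ := by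
    constructor
    · intro x
      rw [hg₂x x]
      exact mul_nonneg (hg.1 x) (hw01 x).1
    · intro x hx
      have : w x = 1 := hw1 hx
      rw [hg₂x, this, mul_one]
      exact hg.2 x (Or.inr hx)
  have : lam L M₁ + lam L M₂ ≤ L g₁ + L g₂ :=
    add_le_add (lam_le hL hmem₁) (lam_le hL hmem₂)
  rw [← hL.map_add, hsum] at this
  linarith

/-- The content vanishes on compacta disjoint from `K`. -/
theorem lam_eq_zero_of_disjoint {M : Set Ann} (hM : IsClosed M) (hKc : IsClosed K)
    (hd : Disjoint K M) : lam L M = 0 := by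
  obtain ⟨w, hw0, hw1, hw01⟩ := exists_continuous_zero_one_of_isClosed hKc hM hd
  set g : BCF := BoundedContinuousFunction.ofNormedAddCommGroup (fun x => w x)
    w.continuous 1 (by
      intro x
      rw [Real.norm_eq_abs, abs_le]
      exact ⟨by linarith [(hw01 x).1], (hw01 x).2⟩) with hgdef
  have hgx : ∀ x, g x = w x := fun _ => rfl
  have hmem : g ∈ testS M := by
    constructor
    · intro x; rw [hgx]; exact (hw01 x).1
    · intro x hx; simp [hgx, hw1 hx]
  have h0 : L g = 0 := hL.eqK_zero g (fun x hx => by rw [hgx]; exact hw0 hx)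
  have := lam_le hL hmem
  rw [h0] at this
  exact le_antisymm this (lam_nonneg hL M)

/-- Invariance of the content under the map `f`, when the functional is invariant. -/
theorem lam_image (e : Ann ≃ₜ Ann) (he : ∀ x, e x = f x) (M : Set Ann) :
    lam L (f '' M) = lam L M := by
  have himg : L '' testS (f '' M) = L '' testS M := by
    apply Set.Subset.antisymm
    · rintro r ⟨g, hg, rfl⟩
      refine ⟨g.compContinuous ⟨(e : Ann → Ann), e.continuous⟩, ⟨?_, ?_⟩, ?_⟩
      · intro x
        exact hg.1 (e x)
      · intro x hx
        have : f x ∈ f '' M := ⟨x, hx, rfl⟩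
        rw [← he x] at this
        exact hg.2 (e x) this
      · exact hL.inv g _ (fun x => by
          show g (e x) = g (f x)
          rw [he x])
    · rintro r ⟨g, hg, rfl⟩
      refine ⟨g.compContinuous ⟨(e.symm : Ann → Ann), e.symm.continuous⟩, ⟨?_, ?_⟩, ?_⟩
      · intro x; exact hg.1 _
      · rintro y ⟨x, hx, rfl⟩
        show (1:ℝ) ≤ g (e.symm (f x))
        rw [← he x, e.symm_apply_apply]
        exact hg.2 x hx
      · refine (hL.inv (g.compContinuous ⟨(e.symm : Ann → Ann), e.symm.continuous⟩) g ?_).symm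
        intro x
        show g x = g (e.symm (f x))
        rw [← he x, e.symm_apply_apply]
  unfold lam
  rw [himg]

end lamLemmas2

end FLC
namespace FLC
open BoundedContinuousFunction TopologicalSpace
open scoped NNReal ENNReal

variable {K : Set Ann} {L : BCF → ℝ}

/-- The content associated to an invariant functional. -/
def rieszC {f : Ann → Ann} (hL : InvFunctional f K L) : Content Ann where
  toFun M := Real.toNNReal (lam L (M : Set Ann))
  mono' M₁ M₂ h := Real.toNNReal_mono (lam_mono hL h)
  sup_disjoint' M₁ M₂ hd h₁ h₂ := by
    have hle : lam L ((M₁ : Set Ann) ∪ (M₂ : Set Ann)) = lam L M₁ + lam L M₂ :=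
      le_antisymm (lam_union_le hL _ _) (add_le_lam_union hL h₁ h₂ hd)
    show (lam L ((M₁ ⊔ M₂ : Compacts Ann) : Set Ann)).toNNReal =
      (lam L (M₁ : Set Ann)).toNNReal + (lam L (M₂ : Set Ann)).toNNReal
    rw [Compacts.coe_sup, hle, Real.toNNReal_add (lam_nonneg hL _) (lam_nonneg hL _)]
  sup_le' M₁ M₂ := by
    show (lam L ((M₁ ⊔ M₂ : Compacts Ann) : Set Ann)).toNNReal ≤
      (lam L (M₁ : Set Ann)).toNNReal + (lam L (M₂ : Set Ann)).toNNReal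
    rw [Compacts.coe_sup]
    calc Real.toNNReal (lam L ((M₁ : Set Ann) ∪ (M₂ : Set Ann)))
        ≤ Real.toNNReal (lam L M₁ + lam L M₂) :=
          Real.toNNReal_mono (lam_union_le hL _ _)
      _ ≤ _ := Real.toNNReal_add_le

set_option maxHeartbeats 1000000 in
theorem exists_invariant_measure (e : Ann ≃ₜ Ann) (hK : IsCompact K)
    (hL : InvFunctional (⇑e) K L) :
    ∃ μ : Measure Ann, IsProbabilityMeasure μ ∧ μ.map (⇑e) = μ ∧ μ Kᶜ = 0 ∧
      ∀ g : BCF, ∫ x, g x ∂μ = L g := by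
  classical
  set C := rieszC hL with hC
  set μ := C.measure with hμ
  have hms : ∀ {s : Set Ann}, MeasurableSet s → μ s = C.outerMeasure s :=
    fun hs => Content.measure_apply C hs
  have htoFun : ∀ M : Compacts Ann, C.toFun M = Real.toNNReal (lam L (M : Set Ann)) :=
    fun _ => rfl
  -- (a) μ is a probability measure
  have huniv : μ Set.univ = 1 := by
    rw [hms MeasurableSet.univ, Content.outerMeasure_of_isOpen _ Set.univ isOpen_univ]
    apply le_antisymm
    · unfold Content.innerContent
      refine iSup₂_le ?_
      intro M _
      show ((C.toFun M : ℝ≥0) : ℝ≥0∞) ≤ 1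
      rw [htoFun]
      have : Real.toNNReal (lam L (M : Set Ann)) ≤ 1 := by
        rw [← Real.toNNReal_one]
        exact Real.toNNReal_mono (lam_le_one hL _)
      exact_mod_cast this
    · have h1 := Content.le_innerContent C ⟨K, hK⟩ ⟨Set.univ, isOpen_univ⟩ (Set.subset_univ _)
      refine le_trans ?_ h1
      show (1 : ℝ≥0∞) ≤ ((C.toFun ⟨K, hK⟩ : ℝ≥0) : ℝ≥0∞)
      rw [htoFun]
      have h2 : (1 : ℝ≥0) ≤ Real.toNNReal (lam L K) := by
        rw [← Real.toNNReal_one]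
        exact Real.toNNReal_mono (one_le_lam_K hL)
      exact_mod_cast h2
  have hprob : IsProbabilityMeasure μ := ⟨huniv⟩
  -- (b) μ vanishes outside K
  have hcompl : μ Kᶜ = 0 := by
    rw [hms hK.isClosed.measurableSet.compl,
      Content.outerMeasure_of_isOpen _ Kᶜ hK.isClosed.isOpen_compl]
    apply le_antisymm _ zero_le
    unfold Content.innerContent
    refine iSup₂_le ?_
    intro M hM
    show ((C.toFun M : ℝ≥0) : ℝ≥0∞) ≤ 0
    rw [htoFun]
    have hd : Disjoint K (M : Set Ann) := by
      rw [Set.disjoint_right]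
      intro x hxM
      exact (hM hxM)
    rw [lam_eq_zero_of_disjoint hL M.isCompact.isClosed hK.isClosed hd]
    simp
  -- (c) invariance
  have hCinv : ∀ ⦃M : Compacts Ann⦄,
      (fun s => ((C.toFun s : ℝ≥0) : ℝ≥0∞)) (Compacts.map ⇑e e.continuous M) =
      (fun s => ((C.toFun s : ℝ≥0) : ℝ≥0∞)) M := by
    intro M
    show ((Real.toNNReal (lam L ((Compacts.map (⇑e) e.continuous M : Compacts Ann) : Set Ann)) : ℝ≥0) : ℝ≥0∞) =
      ((Real.toNNReal (lam L (M : Set Ann)) : ℝ≥0) : ℝ≥0∞)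
    have hcc : lam L ((Compacts.map (⇑e) e.continuous M : Compacts Ann) : Set Ann) = lam L (M : Set Ann) := by
      rw [Compacts.coe_map]
      exact lam_image hL e (fun _ => rfl) (M : Set Ann)
    rw [hcc]
  have hmap : μ.map (⇑e) = μ := by
    refine Measure.ext fun s hs => ?_
    rw [Measure.map_apply e.continuous.measurable hs,
      hms (hs.preimage e.continuous.measurable), hms hs]
    exact Content.outerMeasure_preimage C e hCinv s
  -- (d) comparison of content and measure on compacta
  have hlam_le : ∀ M : Compacts Ann, lam L (M : Set Ann) ≤ (μ (M : Set Ann)).toReal := by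
    intro M
    have h1 : ((C.toFun M : ℝ≥0) : ℝ≥0∞) ≤ μ (M : Set Ann) := by
      refine le_trans (Content.le_outerMeasure_compacts C M) ?_
      rw [hms M.isCompact.isClosed.measurableSet]
    have h2 := ENNReal.toReal_mono (measure_ne_top μ _) h1
    rwa [ENNReal.coe_toReal, htoFun, Real.coe_toNNReal _ (lam_nonneg hL _)] at h2
  -- (e) one-sided representation inequality
  have hrep : ∀ h : BCF, (∀ x, 0 ≤ h x) → L h ≤ ∫ x, h x ∂μ := by
    intro h h0
    refine le_of_forall_pos_le_add ?_
    intro ε hε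
    set δ : ℝ := min (ε / 2) 1 with hδdef
    have hδpos : 0 < δ := lt_min (by linarith) one_pos
    have hδ1 : δ ≤ 1 := min_le_right _ _
    have hδε : 2 * δ ≤ ε := by
      have := min_le_left (ε / 2) 1
      linarith
    set N : ℕ := ⌈‖h‖ / δ⌉₊ with hNdef
    have hNbound : ‖h‖ ≤ (N : ℝ) * δ := by
      have h1 : ‖h‖ / δ ≤ (N : ℝ) := Nat.le_ceil _
      calc ‖h‖ = (‖h‖ / δ) * δ := by field_simp
        _ ≤ (N : ℝ) * δ := by
            apply mul_le_mul_of_nonneg_right h1 hδpos.le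
    set M : ℕ → Compacts Ann := fun i =>
      ⟨K ∩ {x | (i : ℝ) * δ ≤ h x},
        hK.inter_right (isClosed_le continuous_const h.continuous)⟩ with hMdef
    set δ' : ℝ := δ / (N + 1) with hδ'def
    have hδ'pos : 0 < δ' := by positivity
    choose g hg hLg using fun i : ℕ => exists_test (L := L) ((M (i+1) : Set Ann)) hδ'pos
    -- pointwise bound on K
    have hptK : ∀ x ∈ K, h x ≤ δ + δ * ∑ i ∈ Finset.range N, g i x := by
      intro x hx
      set s : Finset ℕ := (Finset.range N).filter (fun i => ((i : ℝ) + 1) * δ ≤ h x) with hsdef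
      have hmemM : ∀ i ∈ s, x ∈ (M (i+1) : Set Ann) := by
        intro i hi
        rw [hsdef, Finset.mem_filter] at hi
        refine ⟨hx, ?_⟩
        show ((i + 1 : ℕ) : ℝ) * δ ≤ h x
        push_cast
        exact hi.2
      have hcard : (s.card : ℝ) ≤ ∑ i ∈ Finset.range N, g i x := by
        calc (s.card : ℝ) = ∑ _i ∈ s, (1 : ℝ) := by simp
          _ ≤ ∑ i ∈ s, g i x := Finset.sum_le_sum (fun i hi => (hg i).2 x (hmemM i hi))
          _ ≤ ∑ i ∈ Finset.range N, g i x :=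
              Finset.sum_le_sum_of_subset_of_nonneg (Finset.filter_subset _ _)
                (fun i _ _ => (hg i).1 x)
      have hhx : h x ≤ δ * (s.card + 1) := by
        by_contra hc
        push_neg at hc
        have hsub : Finset.range (s.card + 1) ⊆ s := by
          intro i hi
          rw [Finset.mem_range] at hi
          have hi1 : ((i : ℝ) + 1) ≤ (s.card : ℝ) + 1 := by
            have : (i : ℝ) ≤ s.card := by exact_mod_cast Nat.lt_succ_iff.mp hi
            linarith
          have hle : ((i : ℝ) + 1) * δ < h x := by
            calc ((i : ℝ) + 1) * δ ≤ ((s.card : ℝ) + 1) * δ :=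
                  mul_le_mul_of_nonneg_right hi1 hδpos.le
              _ = δ * (s.card + 1) := by ring
              _ < h x := hc
          have hiN : i ∈ Finset.range N := by
            rw [Finset.mem_range]
            have hxnorm : h x ≤ ‖h‖ := by
              have := h.norm_coe_le_norm x
              rw [Real.norm_eq_abs] at this
              exact (abs_le.mp this).2
            have : ((i : ℝ) + 1) * δ < (N : ℝ) * δ := lt_of_lt_of_le hle (hxnorm.trans hNbound)
            have h2 : (i : ℝ) + 1 < (N : ℝ) := lt_of_mul_lt_mul_right this hδpos.le
            have h3 : (i : ℝ) < (N : ℝ) := by linarith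
            exact_mod_cast h3
          exact Finset.mem_filter.mpr ⟨hiN, hle.le⟩
        have hcards := Finset.card_le_card hsub
        rw [Finset.card_range] at hcards
        omega
      calc h x ≤ δ * (s.card + 1) := hhx
        _ = δ + δ * (s.card : ℝ) := by ring
        _ ≤ δ + δ * ∑ i ∈ Finset.range N, g i x := by
            have := mul_le_mul_of_nonneg_left hcard hδpos.le
            linarith
    -- functional side
    have hLh : L h ≤ δ + δ * ∑ i ∈ Finset.range N, L (g i) := by
      set G : BCF := δ • (1 : BCF) + δ • ∑ i ∈ Finset.range N, g i with hGdef
      have hGx : ∀ x, G x = δ + δ * ∑ i ∈ Finset.range N, g i x := by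
        intro x
        simp [hGdef, coe_sum, Finset.sum_apply]
      have h1 : L h ≤ L G := hL.monoK _ _ (fun x hx => by rw [hGx x]; exact hptK x hx)
      have h2 : L G = δ + δ * ∑ i ∈ Finset.range N, L (g i) := by
        rw [hGdef, hL.map_add, hL.map_smul, hL.map_one, hL.map_smul, hL.map_finset_sum]
        ring
      rw [h2] at h1
      exact h1
    have hsum1 : ∑ i ∈ Finset.range N, L (g i) ≤
        (∑ i ∈ Finset.range N, lam L ((M (i+1) : Set Ann))) + (N : ℝ) * δ' := by
      calc ∑ i ∈ Finset.range N, L (g i)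
          ≤ ∑ i ∈ Finset.range N, (lam L ((M (i+1) : Set Ann)) + δ') :=
            Finset.sum_le_sum (fun i _ => (hLg i).le)
        _ = _ := by rw [Finset.sum_add_distrib]; simp [mul_comm]
    have hNδ' : (N : ℝ) * δ' ≤ δ := by
      rw [hδ'def]
      rw [mul_div_assoc']
      rw [div_le_iff₀ (by positivity)]
      have : (N : ℝ) ≤ (N : ℝ) + 1 := by linarith
      calc (N : ℝ) * δ ≤ ((N : ℝ) + 1) * δ := by nlinarith [hδpos.le]
        _ = δ * ((N : ℝ) + 1) := by ring
    -- integral side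
    have hint : δ * ∑ i ∈ Finset.range N, (μ ((M (i+1) : Set Ann))).toReal ≤ ∫ x, h x ∂μ := by
      set F : Ann → ℝ := fun x =>
        ∑ i ∈ Finset.range N, Set.indicator ((M (i+1) : Set Ann)) (fun _ => δ) x with hFdef
      have hFint : MeasureTheory.Integrable F μ := by
        apply MeasureTheory.integrable_finset_sum
        intro i _
        exact (MeasureTheory.integrable_const δ).indicator
          (M (i+1)).isCompact.isClosed.measurableSet
      have hFle : ∀ x, F x ≤ h x := by
        intro x
        by_cases hxK : x ∈ K
        · set s : Finset ℕ := (Finset.range N).filter (fun i => ((i : ℝ) + 1) * δ ≤ h x)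
            with hsdef
          have hFx : F x = δ * (s.card : ℝ) := by
            simp only [hFdef]
            have : ∀ i ∈ Finset.range N,
                Set.indicator ((M (i+1) : Set Ann)) (fun _ => δ) x =
                  if i ∈ s then δ else 0 := by
              intro i hi
              by_cases hmem : x ∈ (M (i+1) : Set Ann)
              · rw [Set.indicator_of_mem hmem, if_pos]
                rw [hsdef, Finset.mem_filter]
                refine ⟨hi, ?_⟩
                have := hmem.2
                show ((i : ℝ) + 1) * δ ≤ h x
                push_cast at this ⊢
                exact this
              · rw [Set.indicator_of_notMem hmem, if_neg]
                rw [hsdef, Finset.mem_filter]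
                rintro ⟨-, hc⟩
                exact hmem ⟨hxK, by push_cast; exact hc⟩
            rw [Finset.sum_congr rfl this, Finset.sum_ite_mem,
              Finset.inter_eq_right.mpr (Finset.filter_subset _ _), Finset.sum_const]
            simp [mul_comm, hsdef]
          rw [hFx]
          rcases Finset.eq_empty_or_nonempty s with hse | hsne
          · rw [hse]
            simpa using h0 x
          · set j := s.max' hsne with hjdef
            have hjs : j ∈ s := s.max'_mem hsne
            have hj1 : ((j : ℝ) + 1) * δ ≤ h x := by
              rw [hsdef, Finset.mem_filter] at hjs
              exact hjs.2
            have hcardj : (s.card : ℝ) ≤ (j : ℝ) + 1 := by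
              have : s ⊆ Finset.range (j + 1) := by
                intro i hi
                rw [Finset.mem_range, Nat.lt_succ_iff]
                exact s.le_max' i hi
              have := Finset.card_le_card this
              rw [Finset.card_range] at this
              exact_mod_cast this
            calc δ * (s.card : ℝ) ≤ δ * ((j : ℝ) + 1) :=
                mul_le_mul_of_nonneg_left hcardj hδpos.le
              _ = ((j : ℝ) + 1) * δ := by ring
              _ ≤ h x := hj1
        · have hFx : F x = 0 := by
            rw [hFdef]
            apply Finset.sum_eq_zero
            intro i _
            apply Set.indicator_of_notMem
            rintro ⟨hxK', -⟩
            exact hxK hxK'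
          rw [hFx]
          exact h0 x
      have hFint_eq : ∫ x, F x ∂μ =
          δ * ∑ i ∈ Finset.range N, (μ ((M (i+1) : Set Ann))).toReal := by
        have h1 : ∫ x, F x ∂μ = ∑ i ∈ Finset.range N,
            ∫ x, Set.indicator ((M (i+1) : Set Ann)) (fun _ => δ) x ∂μ := by
          simp only [hFdef]
          exact MeasureTheory.integral_finset_sum _ (fun i _ =>
            (MeasureTheory.integrable_const δ).indicator
              (M (i+1)).isCompact.isClosed.measurableSet)
        rw [h1, Finset.mul_sum]
        refine Finset.sum_congr rfl (fun i _ => ?_)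
        rw [MeasureTheory.integral_indicator_const δ
          (M (i+1)).isCompact.isClosed.measurableSet]
        simp [mul_comm, measureReal_def]
      have := MeasureTheory.integral_mono hFint (h.integrable μ) hFle
      rw [hFint_eq] at this
      exact this
    -- combine
    have hlamsum : δ * ∑ i ∈ Finset.range N, lam L ((M (i+1) : Set Ann)) ≤
        δ * ∑ i ∈ Finset.range N, (μ ((M (i+1) : Set Ann))).toReal := by
      apply mul_le_mul_of_nonneg_left _ hδpos.le
      exact Finset.sum_le_sum (fun i _ => hlam_le (M (i+1)))
    have hδδ' : δ * ((N : ℝ) * δ') ≤ δ := by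
      calc δ * ((N : ℝ) * δ') ≤ δ * δ := by
            apply mul_le_mul_of_nonneg_left hNδ' hδpos.le
        _ ≤ δ * 1 := by nlinarith
        _ = δ := mul_one δ
    calc L h ≤ δ + δ * ∑ i ∈ Finset.range N, L (g i) := hLh
      _ ≤ δ + δ * ((∑ i ∈ Finset.range N, lam L ((M (i+1) : Set Ann))) + (N : ℝ) * δ') := by
          have := mul_le_mul_of_nonneg_left hsum1 hδpos.le
          linarith
      _ = δ + δ * ∑ i ∈ Finset.range N, lam L ((M (i+1) : Set Ann)) + δ * ((N : ℝ) * δ') := by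
          ring
      _ ≤ δ + δ * ∑ i ∈ Finset.range N, (μ ((M (i+1) : Set Ann))).toReal + δ := by
          linarith
      _ ≤ (∫ x, h x ∂μ) + 2 * δ := by linarith
      _ ≤ (∫ x, h x ∂μ) + ε := by linarith
  -- (f) full representation
  refine ⟨μ, hprob, hmap, hcompl, ?_⟩
  intro g
  set c : ℝ := ‖g‖ with hcdef
  have hb : ∀ x, |g x| ≤ c := by
    intro x
    have := g.norm_coe_le_norm x
    rwa [Real.norm_eq_abs] at this
  have hint1 : ∫ x, ((g + c • (1 : BCF)) : BCF) x ∂μ = (∫ x, g x ∂μ) + c := by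
    have : ∀ x, ((g + c • (1 : BCF)) : BCF) x = g x + c := by intro x; simp
    rw [MeasureTheory.integral_congr_ae (Filter.Eventually.of_forall this)]
    rw [MeasureTheory.integral_add (g.integrable μ) (MeasureTheory.integrable_const c)]
    simp [huniv]
  have hint2 : ∫ x, ((c • (1 : BCF) - g) : BCF) x ∂μ = c - ∫ x, g x ∂μ := by
    have : ∀ x, ((c • (1 : BCF) - g) : BCF) x = c - g x := by intro x; simp
    rw [MeasureTheory.integral_congr_ae (Filter.Eventually.of_forall this)]
    rw [MeasureTheory.integral_sub (MeasureTheory.integrable_const c) (g.integrable μ)]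
    simp [huniv]
  have hL1 : L (g + c • (1 : BCF)) = L g + c := by
    rw [hL.map_add, hL.map_const]
  have hL2 : L (c • (1 : BCF) - g) = c - L g := by
    rw [hL.map_sub, hL.map_const]
  have hle1 : L g + c ≤ (∫ x, g x ∂μ) + c := by
    rw [← hL1, ← hint1]
    exact hrep _ (fun x => by simp; linarith [(abs_le.mp (hb x)).1])
  have hle2 : c - L g ≤ c - ∫ x, g x ∂μ := by
    rw [← hL2, ← hint2]
    exact hrep _ (fun x => by simp; linarith [(abs_le.mp (hb x)).2])
  linarith

end FLC
namespace FLC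
open BoundedContinuousFunction TopologicalSpace
open scoped NNReal ENNReal

set_option maxHeartbeats 1000000 in
/-- If all invariant probability measures carried by the compact invariant set `K` give the
same integral `α` to `φ`, then the Birkhoff averages of `φ` converge to `α` uniformly on `K`. -/
theorem unique_average (e : Ann ≃ₜ Ann) (K : Set Ann) (hK : IsCompact K)
    (hfK : ∀ x ∈ K, e x ∈ K) (φ : Ann → ℝ) (hφ : Continuous φ) (α : ℝ)
    (H : ∀ μ : Measure Ann, IsProbabilityMeasure μ → μ.map (⇑e) = μ → μ Kᶜ = 0 →
      (∫ x, φ x ∂μ) = α) :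
    TendstoUniformlyOn (fun (n : ℕ) (x : Ann) => (∑ k ∈ Finset.range n, φ ((⇑e)^[k] x)) / n)
      (fun _ => α) Filter.atTop K := by
  classical
  -- orbits starting in K stay in K
  have horb : ∀ x ∈ K, ∀ k : ℕ, (⇑e)^[k] x ∈ K := by
    intro x hx k
    induction k with
    | zero => simpa using hx
    | succ k ih => rw [Function.iterate_succ_apply']; exact hfK _ ih
  -- a bounded continuous function agreeing with φ on K
  obtain ⟨c₀, hc₀⟩ := hK.exists_bound_of_continuousOn hφ.continuousOn
  set c : ℝ := max c₀ 0 with hcdef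
  have hc : ∀ x ∈ K, |φ x| ≤ c := by
    intro x hx
    calc |φ x| = ‖φ x‖ := (Real.norm_eq_abs _).symm
      _ ≤ c₀ := hc₀ x hx
      _ ≤ c := le_max_left _ _
  have hc0 : 0 ≤ c := le_max_right _ _
  set φb : BCF := BoundedContinuousFunction.ofNormedAddCommGroup
    (fun x => max (min (φ x) c) (-c)) (((hφ.min continuous_const).max continuous_const)) c
    (by
      intro x
      rw [Real.norm_eq_abs, abs_le]
      constructor
      · exact le_max_right _ _
      · exact max_le (min_le_right _ _) (by linarith)) with hφbdef
  have hφb : ∀ x ∈ K, φb x = φ x := by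
    intro x hx
    have h1 := (abs_le.mp (hc x hx)).1
    have h2 := (abs_le.mp (hc x hx)).2
    show max (min (φ x) c) (-c) = φ x
    rw [min_eq_left h2, max_eq_left h1]
  -- suppose the convergence fails
  by_contra hcon
  rw [Metric.tendstoUniformlyOn_iff] at hcon
  push_neg at hcon
  obtain ⟨ε, hε, hfreq⟩ := hcon
  obtain ⟨m, hmono, hm⟩ := Filter.extraction_of_frequently_atTop hfreq
  set n : ℕ → ℕ := fun k => m (k + 1) with hndef
  have hnk : ∀ k, k + 1 ≤ n k := fun k => hmono.le_apply
  have hnpos : ∀ k, 0 < n k := fun k => lt_of_lt_of_le (Nat.succ_pos k) (hnk k)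
  choose x hxK hxdev using fun k => hm (k + 1)
  -- the empirical averages
  set A : ℕ → BCF → ℝ := fun k g =>
    (∑ j ∈ Finset.range (n k), g ((⇑e)^[j] (x k))) / (n k) with hAdef
  -- limits along an ultrafilter
  set u : Ultrafilter ℕ := Ultrafilter.of Filter.atTop with hudef
  have hu : (u : Filter ℕ) ≤ Filter.atTop := Ultrafilter.of_le _
  have hlim : ∀ g : BCF, ∃ r : ℝ, Filter.Tendsto (fun k => A k g) ↑u (𝓝 r) := by
    intro g
    have hbound : ∀ k, A k g ∈ Set.Icc (-‖g‖) ‖g‖ := by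
      intro k
      rw [Set.mem_Icc, ← abs_le, hAdef]
      rw [abs_div]
      rw [abs_of_pos (by exact_mod_cast hnpos k : (0:ℝ) < (n k : ℝ))]
      rw [div_le_iff₀ (by exact_mod_cast hnpos k : (0:ℝ) < (n k : ℝ))]
      calc |∑ j ∈ Finset.range (n k), g ((⇑e)^[j] (x k))|
          ≤ ∑ j ∈ Finset.range (n k), |g ((⇑e)^[j] (x k))| := Finset.abs_sum_le_sum_abs _ _
        _ ≤ ∑ _j ∈ Finset.range (n k), ‖g‖ := Finset.sum_le_sum (fun j _ => by
            have := g.norm_coe_le_norm ((⇑e)^[j] (x k))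
            rwa [Real.norm_eq_abs] at this)
        _ = (n k : ℝ) * ‖g‖ := by simp [mul_comm]
        _ = ‖g‖ * (n k : ℝ) := by ring
    have hle : (u.map (fun k => A k g) : Filter ℝ) ≤ Filter.principal (Set.Icc (-‖g‖) ‖g‖) := by
      rw [Ultrafilter.coe_map, Filter.le_principal_iff, Filter.mem_map]
      exact Filter.Eventually.of_forall hbound
    obtain ⟨r, -, hr⟩ := isCompact_Icc.ultrafilter_le_nhds (u.map (fun k => A k g)) hle
    exact ⟨r, by rwa [Filter.Tendsto, ← Ultrafilter.coe_map]⟩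
  choose Lf hLf using hlim
  -- the limit functional is an invariant functional
  have hIF : InvFunctional (⇑e) K Lf := by
    constructor
    · -- additivity
      intro g h
      have heq : (fun k => A k (g + h)) = fun k => A k g + A k h := by
        funext k
        rw [hAdef]
        simp only [coe_add, Pi.add_apply, Finset.sum_add_distrib]
        rw [add_div]
      refine tendsto_nhds_unique (hLf (g + h)) ?_
      rw [heq]
      exact (hLf g).add (hLf h)
    · -- homogeneity
      intro cc g
      have heq : (fun k => A k (cc • g)) = fun k => cc * A k g := by
        funext k
        rw [hAdef]
        simp only [coe_smul, Pi.smul_apply, smul_eq_mul, ← Finset.mul_sum]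
        rw [mul_div_assoc]
      refine tendsto_nhds_unique (hLf (cc • g)) ?_
      rw [heq]
      exact (hLf g).const_mul cc
    · -- normalization
      have heq : (fun k => A k 1) = fun _ => (1 : ℝ) := by
        funext k
        rw [hAdef]
        simp only [BoundedContinuousFunction.coe_one, Pi.one_apply, Finset.sum_const,
          Finset.card_range, nsmul_eq_mul, mul_one]
        rw [div_self (by exact_mod_cast (hnpos k).ne' : ((n k : ℝ)) ≠ 0)]
      refine tendsto_nhds_unique (hLf 1) ?_
      rw [heq]
      exact tendsto_const_nhds
    · -- positivity on K
      intro g hg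
      refine ge_of_tendsto (hLf g) (Filter.Eventually.of_forall ?_)
      intro k
      rw [hAdef]
      apply div_nonneg _ (by positivity)
      exact Finset.sum_nonneg (fun j _ => hg _ (horb (x k) (hxK k) j))
    · -- invariance
      intro g h hgh
      have hA : ∀ k, A k h = A k g + (g ((⇑e)^[n k] (x k)) - g (x k)) / (n k) := by
        intro k
        rw [hAdef]
        have h1 : ∀ j, h ((⇑e)^[j] (x k)) = g ((⇑e)^[j + 1] (x k)) := by
          intro j
          rw [hgh, Function.iterate_succ_apply']
        simp only [h1]
        have h2 : ∑ j ∈ Finset.range (n k), g ((⇑e)^[j + 1] (x k)) =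
            (∑ j ∈ Finset.range (n k), g ((⇑e)^[j] (x k))) + g ((⇑e)^[n k] (x k))
              - g ((⇑e)^[0] (x k)) := by
          have h3 := Finset.sum_range_succ' (fun j => g ((⇑e)^[j] (x k))) (n k)
          have h4 := Finset.sum_range_succ (fun j => g ((⇑e)^[j] (x k))) (n k)
          rw [h4] at h3
          linarith [h3]
        rw [h2]
        simp only [Function.iterate_zero_apply]
        rw [add_sub_assoc, add_div]
      have hT0 : Filter.Tendsto (fun k => (g ((⇑e)^[n k] (x k)) - g (x k)) / (n k))
          Filter.atTop (𝓝 0) := by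
        have hbnd : ∀ k, ‖(g ((⇑e)^[n k] (x k)) - g (x k)) / (n k : ℝ)‖ ≤
            2 * ‖g‖ / (k + 1 : ℝ) := by
          intro k
          have hnpos' : (0:ℝ) < (n k : ℝ) := by exact_mod_cast hnpos k
          rw [Real.norm_eq_abs, abs_div, abs_of_pos hnpos']
          have hnum : |g ((⇑e)^[n k] (x k)) - g (x k)| ≤ 2 * ‖g‖ := by
            have e1 := g.norm_coe_le_norm ((⇑e)^[n k] (x k))
            have e2 := g.norm_coe_le_norm (x k)
            rw [Real.norm_eq_abs] at e1 e2
            calc |g ((⇑e)^[n k] (x k)) - g (x k)|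
                ≤ |g ((⇑e)^[n k] (x k))| + |g (x k)| := abs_sub _ _
              _ ≤ 2 * ‖g‖ := by linarith
          have hk1 : (0:ℝ) < (k + 1 : ℝ) := by positivity
          have hkn : ((k:ℝ) + 1) ≤ (n k : ℝ) := by exact_mod_cast hnk k
          calc |g ((⇑e)^[n k] (x k)) - g (x k)| / (n k : ℝ)
              ≤ (2 * ‖g‖) / (n k : ℝ) := by gcongr
            _ ≤ 2 * ‖g‖ / (k + 1 : ℝ) := by gcongr
        have hgt : Filter.Tendsto (fun k : ℕ => 2 * ‖g‖ / ((k : ℝ) + 1)) Filter.atTop (𝓝 0) := by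
          have h5 : Filter.Tendsto (fun k : ℕ => ((k : ℝ) + 1)) Filter.atTop Filter.atTop := by
            apply Filter.tendsto_atTop_add_const_right
            exact tendsto_natCast_atTop_atTop
          exact Filter.Tendsto.div_atTop tendsto_const_nhds h5
        exact squeeze_zero_norm hbnd hgt
      refine tendsto_nhds_unique (hLf h) ?_
      have : Filter.Tendsto (fun k => A k g + (g ((⇑e)^[n k] (x k)) - g (x k)) / (n k))
          ↑u (𝓝 (Lf g + 0)) := (hLf g).add (hT0.mono_left hu)
      rw [add_zero] at this
      refine Filter.Tendsto.congr (fun k => (hA k).symm) this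
  -- the deviation persists in the limit
  have hAφ : ∀ k, A k φb = (∑ j ∈ Finset.range (n k), φ ((⇑e)^[j] (x k))) / (n k) := by
    intro k
    simp only [hAdef]
    exact congrArg (· / ((n k : ℕ) : ℝ))
      (Finset.sum_congr rfl (fun j _ => hφb _ (horb (x k) (hxK k) j)))
  have hdev : ε ≤ dist α (Lf φb) := by
    have h1 : Filter.Tendsto (fun k => dist α (A k φb)) ↑u (𝓝 (dist α (Lf φb))) :=
      Filter.Tendsto.dist tendsto_const_nhds (hLf φb)
    refine ge_of_tendsto h1 (Filter.Eventually.of_forall ?_)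
    intro k
    rw [hAφ k]
    exact hxdev k
  -- produce the invariant measure and derive a contradiction
  obtain ⟨μ, hμp, hμmap, hμc, hμrep⟩ := exists_invariant_measure e hK hIF
  have hae : ∀ᵐ x ∂μ, φ x = φb x := by
    have hsub : {x | ¬ (φ x = φb x)} ⊆ Kᶜ := by
      intro x hx hxK
      exact hx (hφb x hxK).symm
    exact MeasureTheory.ae_iff.mpr (measure_mono_null hsub hμc)
  have hαL : α = Lf φb := by
    have h1 : (∫ x, φ x ∂μ) = α := H μ hμp hμmap hμc
    have h2 : (∫ x, φ x ∂μ) = ∫ x, φb x ∂μ := MeasureTheory.integral_congr_ae hae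
    rw [h2, hμrep φb] at h1
    exact h1.symm
  rw [← hαL, dist_self] at hdev
  linarith

end FLC
/-- Franks–Le Calvez, Corollary 3.1. If the rotation set of `f` on an
annular continuum `K` is a single number `{α}`, then the Birkhoff quotients
`(p₁(f̃ⁿ(x̃)) − p₁(x̃))/n` converge uniformly on `π⁻¹(K)` to the constant `α`; in
particular every point of `K` has rotation number `α` under `f`. -/
theorem rotSet_singleton_uniform_convergence (f : Ann ≃ₜ Ann) (K : Set Ann)
    (hK : IsAnnularContinuum K) (hfK : f '' K = K)
    (ft : Cov → Cov) (hft : Continuous ft) (hlift : ∀ z : Cov, proj (ft z) = f (proj z))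
    (φ : Ann → ℝ) (hφ : Continuous φ) (hφl : ∀ z : Cov, φ (proj z) = (ft z).1 - z.1)
    (α : ℝ) (hα : rotSet f φ K = {α}) :
    TendstoUniformlyOn (fun (n : ℕ) (z : Cov) => ((ft^[n] z).1 - z.1) / n)
      (fun _ => α) Filter.atTop (proj ⁻¹' K) ∧
    ∀ z ∈ proj ⁻¹' K,
      Filter.Tendsto (fun n : ℕ => ((ft^[n] z).1 - z.1) / n) Filter.atTop (nhds α) := by
  -- `K` is forward invariant
  have hKinv : ∀ x ∈ K, f x ∈ K := by
    intro x hx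
    rw [← hfK]
    exact Set.mem_image_of_mem _ hx
  -- every invariant measure carried by `K` integrates `φ` to `α`
  have H : ∀ μ : Measure Ann, IsProbabilityMeasure μ → μ.map (⇑f) = μ → μ Kᶜ = 0 →
      (∫ x, φ x ∂μ) = α := by
    intro μ h1 h2 h3
    have hmem : (∫ x, φ x ∂μ) ∈ rotSet (⇑f) φ K := ⟨μ, h1, h2, h3, rfl⟩
    rw [hα] at hmem
    exact hmem
  -- uniform convergence of the Birkhoff averages downstairs
  have hunif := FLC.unique_average f K hK.1 hKinv φ hφ α H
  -- the displacement is a Birkhoff sum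
  have hproj : ∀ (n : ℕ) (z : Cov), proj (ft^[n] z) = (⇑f)^[n] (proj z) := by
    intro n
    induction n with
    | zero => intro z; simp
    | succ n ih =>
        intro z
        rw [Function.iterate_succ_apply', Function.iterate_succ_apply', hlift, ih]
  have hdisp : ∀ (n : ℕ) (z : Cov),
      (ft^[n] z).1 - z.1 = ∑ k ∈ Finset.range n, φ ((⇑f)^[k] (proj z)) := by
    intro n
    induction n with
    | zero => intro z; simp
    | succ n ih =>
        intro z
        rw [Finset.sum_range_succ, ← ih z, Function.iterate_succ_apply', ← hproj n z, hφl]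
        ring
  -- transfer the uniform convergence through the covering projection
  have hmain : TendstoUniformlyOn (fun (n : ℕ) (z : Cov) => ((ft^[n] z).1 - z.1) / n)
      (fun _ => α) Filter.atTop (proj ⁻¹' K) := by
    intro u hu
    filter_upwards [hunif u hu] with n hn
    intro z hz
    have h1 := hn (proj z) hz
    rw [hdisp n z]
    exact h1
  exact ⟨hmain, fun z hz => hmain.tendsto_at hz⟩
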